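/- Let t_ε ∈ ℝ, ε₁ > 0, V₋, V₊ > 0 and δ ≥ 0 with δ < ε₁ √(V₋/V₊). Let y: [t_ε, ∞) → ℝ² be continuous and V: ℝ² × [t_ε, ∞) → ℝ be such that (a) V₋ |w|² ≤ V(w, t) ≤ V₊ |w|² for all t ≥ t_ε and all w ∈ ℝ² with |w| ≤ ε₁, and (b) the function t ↦ V(y(t), t) is continuous and is nonincreasing on every interval on which δ ≤ |y(t)| ≤ ε₁. If |y(t_ε)| ≤ δ, then |y(t)| < ε₁ for all t ≥ t_ε. -/

import Mathlib

open Real Filter Set Topology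

/-- One-sided limit bound from the left. -/
lemma left_limit_le {a b c : ℝ} (hab : a < b) {g : ℝ → ℝ}
    (hg : ContinuousWithinAt g (Ioo a b) b)
    (h : ∀ t ∈ Ioo a b, g t ≤ c) : g b ≤ c := by
  have hne : (𝓝[Ioo a b] b).NeBot := by
    rw [nhdsWithin_Ioo_eq_nhdsLT hab]
    exact nhdsLT_neBot b
  exact le_of_tendsto hg (eventually_mem_nhdsWithin.mono h)

/-- One-sided limit bound from the right. -/
lemma right_limit_le {a b c : ℝ} (hab : a < b) {g : ℝ → ℝ}
    (hg : ContinuousWithinAt g (Ioo a b) a)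
    (h : ∀ t ∈ Ioo a b, c ≤ g t) : c ≤ g a := by
  have hne : (𝓝[Ioo a b] a).NeBot := by
    rw [nhdsWithin_Ioo_eq_nhdsGT hab]
    exact nhdsGT_neBot a
  exact ge_of_tendsto hg (eventually_mem_nhdsWithin.mono h)

/-- Deterministic Lyapunov confinement: a trajectory starting in the ball of radius `δ`
cannot leave the ball of radius `ε₁` if the Lyapunov function `V`, sandwiched between
`V₋‖w‖²` and `V₊‖w‖²`, is nonincreasing along the trajectory on the annulus
`δ ≤ ‖y(t)‖ ≤ ε₁`, provided `δ < ε₁ √(V₋/V₊)`. -/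
theorem lyapunov_confinement
    (tε ε₁ Vm Vp δ : ℝ) (hε₁ : 0 < ε₁) (hVm : 0 < Vm) (hVp : 0 < Vp)
    (hδ0 : 0 ≤ δ) (hδ : δ < ε₁ * Real.sqrt (Vm / Vp))
    (y : ℝ → EuclideanSpace ℝ (Fin 2))
    (V : EuclideanSpace ℝ (Fin 2) → ℝ → ℝ)
    (hy : ContinuousOn y (Ici tε))
    (hVbound : ∀ (w : EuclideanSpace ℝ (Fin 2)) (t : ℝ), tε ≤ t → ‖w‖ ≤ ε₁ →
      Vm * ‖w‖ ^ 2 ≤ V w t ∧ V w t ≤ Vp * ‖w‖ ^ 2)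
    (hVcont : ContinuousOn (fun t => V (y t) t) (Ici tε))
    (hVdecr : ∀ a b : ℝ, tε ≤ a → a ≤ b →
      (∀ t ∈ Icc a b, δ ≤ ‖y t‖ ∧ ‖y t‖ ≤ ε₁) →
      AntitoneOn (fun t => V (y t) t) (Icc a b))
    (hinit : ‖y tε‖ ≤ δ) :
    ∀ t, tε ≤ t → ‖y t‖ < ε₁ := by
  -- squared inequality
  have hδsq : Vp * δ ^ 2 < Vm * ε₁ ^ 2 := by
    have hs : Real.sqrt (Vm / Vp) > 0 := Real.sqrt_pos.2 (div_pos hVm hVp)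
    have h2 : δ ^ 2 < (ε₁ * Real.sqrt (Vm / Vp)) ^ 2 := by
      have := mul_self_lt_mul_self hδ0 hδ
      nlinarith
    have h3 : (ε₁ * Real.sqrt (Vm / Vp)) ^ 2 = ε₁ ^ 2 * (Vm / Vp) := by
      rw [mul_pow, Real.sq_sqrt (le_of_lt (div_pos hVm hVp))]
    rw [h3] at h2
    have := mul_lt_mul_of_pos_left h2 hVp
    calc Vp * δ ^ 2 < Vp * (ε₁ ^ 2 * (Vm / Vp)) := this
      _ = Vm * ε₁ ^ 2 := by field_simp
  have hVmp : Vm ≤ Vp := by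
    set w : EuclideanSpace ℝ (Fin 2) := ε₁ • (EuclideanSpace.single 0 (1:ℝ)) with hw
    have hnw : ‖w‖ = ε₁ := by
      rw [hw, norm_smul, EuclideanSpace.norm_single]
      simp [abs_of_pos hε₁]
    have := hVbound w tε (le_refl _) (le_of_eq hnw)
    rw [hnw] at this
    nlinarith [this.1, this.2, pow_pos hε₁ 2]
  have hδε : δ < ε₁ := by
    have : Real.sqrt (Vm / Vp) ≤ 1 := by
      rw [show (1:ℝ) = Real.sqrt 1 by simp]
      exact Real.sqrt_le_sqrt (by rw [div_le_one hVp]; exact hVmp)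
    nlinarith [Real.sqrt_nonneg (Vm / Vp)]
  set g : ℝ → ℝ := fun t => ‖y t‖ with hg_def
  have hgcont : ContinuousOn g (Ici tε) := hy.norm
  intro T hT
  by_contra hC
  push_neg at hC
  -- T > tε
  have hTgt : tε < T := by
    rcases lt_or_eq_of_le hT with h | h
    · exact h
    · exact absurd hC (by rw [← h]; exact not_le.2 (lt_of_le_of_lt hinit hδε))
  have hIccT : Icc tε T ⊆ Ici tε := Icc_subset_Ici_self
  have hgcT : ContinuousOn g (Icc tε T) := hgcont.mono hIccT
  -- first hitting time of ε₁
  set A : Set ℝ := {t ∈ Icc tε T | ε₁ ≤ g t} with hA_def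
  have hA_closed : IsClosed A := by
    have : A = Icc tε T ∩ g ⁻¹' (Ici ε₁) := by ext t; simp [hA_def, and_comm]
    rw [this]
    exact ContinuousOn.preimage_isClosed_of_isClosed hgcT isClosed_Icc isClosed_Ici
  have hA_ne : A.Nonempty := ⟨T, ⟨le_of_lt hTgt, le_refl T⟩, hC⟩
  have hA_bdd : BddBelow A := ⟨tε, fun t ht => ht.1.1⟩
  set t₁ : ℝ := sInf A with ht₁_def
  have ht₁A : t₁ ∈ A := hA_closed.csInf_mem hA_ne hA_bdd
  have ht₁mem : t₁ ∈ Icc tε T := ht₁A.1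
  have ht₁ge : ε₁ ≤ g t₁ := ht₁A.2
  have ht₁gt : tε < t₁ := by
    rcases lt_or_eq_of_le ht₁mem.1 with h | h
    · exact h
    · exact absurd ht₁ge (by rw [← h]; exact not_le.2 (lt_of_le_of_lt hinit hδε))
  -- before t₁, g < ε₁
  have hbefore : ∀ t ∈ Ico tε t₁, g t < ε₁ := by
    intro t ht
    by_contra hcontra
    push_neg at hcontra
    have : t ∈ A := ⟨⟨ht.1, le_trans (le_of_lt ht.2) ht₁mem.2⟩, hcontra⟩
    exact absurd (csInf_le hA_bdd this) (not_le.2 ht.2)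
  -- g t₁ = ε₁ by left limit
  have hgt₁ : g t₁ = ε₁ := by
    refine le_antisymm ?_ ht₁ge
    refine left_limit_le ht₁gt ((hgcont t₁ ht₁mem.1).mono fun s hs => le_of_lt hs.1) ?_
    intro s hs; exact le_of_lt (hbefore s ⟨le_of_lt hs.1, hs.2⟩)
  -- last time ≤ δ before t₁
  set B : Set ℝ := {t ∈ Icc tε t₁ | g t ≤ δ} with hB_def
  have hIcc1 : Icc tε t₁ ⊆ Ici tε := Icc_subset_Ici_self
  have hB_closed : IsClosed B := by
    have : B = Icc tε t₁ ∩ g ⁻¹' (Iic δ) := by ext t; simp [hB_def, and_comm]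
    rw [this]
    exact ContinuousOn.preimage_isClosed_of_isClosed (hgcont.mono hIcc1) isClosed_Icc isClosed_Iic
  have hB_ne : B.Nonempty := ⟨tε, ⟨le_refl _, le_of_lt ht₁gt⟩, hinit⟩
  have hB_bdd : BddAbove B := ⟨t₁, fun t ht => ht.1.2⟩
  set t₀ : ℝ := sSup B with ht₀_def
  have ht₀B : t₀ ∈ B := hB_closed.csSup_mem hB_ne hB_bdd
  have ht₀mem : t₀ ∈ Icc tε t₁ := ht₀B.1
  have ht₀le : g t₀ ≤ δ := ht₀B.2
  have ht₀lt : t₀ < t₁ := by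
    rcases lt_or_eq_of_le ht₀mem.2 with h | h
    · exact h
    · exfalso; rw [h, hgt₁] at ht₀le; exact absurd ht₀le (not_le.2 hδε)
  -- after t₀ (within (t₀, t₁]), δ < g t
  have hafter : ∀ t, t₀ < t → t ≤ t₁ → δ ≤ g t := by
    intro t ht ht'
    by_contra hcontra
    push_neg at hcontra
    have : t ∈ B := ⟨⟨le_trans ht₀mem.1 (le_of_lt ht), ht'⟩, le_of_lt hcontra⟩
    exact absurd (le_csSup hB_bdd this) (not_le.2 ht)
  -- g t₀ = δ by right limit
  have hgt₀ : δ ≤ g t₀ := by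
    refine right_limit_le ht₀lt ((hgcont t₀ ht₀mem.1).mono fun s hs => le_trans ht₀mem.1 (le_of_lt hs.1)) ?_
    intro s hs; exact hafter s hs.1 (le_of_lt hs.2)
  -- annulus condition on [t₀, t₁]
  have hann : ∀ t ∈ Icc t₀ t₁, δ ≤ g t ∧ g t ≤ ε₁ := by
    intro t ht
    constructor
    · rcases lt_or_eq_of_le ht.1 with h | h
      · exact hafter t h ht.2
      · rw [← h]; exact hgt₀
    · rcases lt_or_eq_of_le ht.2 with h | h
      · exact le_of_lt (hbefore t ⟨le_trans ht₀mem.1 ht.1, h⟩)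
      · rw [h, hgt₁]
  -- V decreases on [t₀, t₁]
  have hanti := hVdecr t₀ t₁ ht₀mem.1 (le_of_lt ht₀lt) hann
  have hVle : V (y t₁) t₁ ≤ V (y t₀) t₀ :=
    hanti ⟨le_refl _, le_of_lt ht₀lt⟩ ⟨le_of_lt ht₀lt, le_refl _⟩ (le_of_lt ht₀lt)
  have ht₁ge' : tε ≤ t₁ := le_trans ht₀mem.1 (le_of_lt ht₀lt)
  have hb₁ := hVbound (y t₁) t₁ ht₁ge' (le_of_eq hgt₁)
  have hb₀ := hVbound (y t₀) t₀ ht₀mem.1 (le_trans ht₀le (le_of_lt hδε))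
  have h1 : Vm * ε₁ ^ 2 ≤ V (y t₁) t₁ := by rw [← hgt₁]; exact hb₁.1
  have h2 : V (y t₀) t₀ ≤ Vp * δ ^ 2 := by
    refine le_trans hb₀.2 ?_
    have : g t₀ ^ 2 ≤ δ ^ 2 := by nlinarith [norm_nonneg (y t₀)]
    nlinarith
  linarith
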